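/- arXiv:1108.1335 — 3 statements merged into one kernel-verified Lean document; each statement's English description precedes it below -/
import Mathlib

section
/- Let Q : V → W be linear between finite-dimensional real inner product spaces with Q Qᵀ = id_W, and let a, a_k > 0, L > 0 be reals with a_{k+1} := a_k·a/(a_k + a·L^{-2}). For vectors Φ ∈ W and v ∈ V, define Ψ := v − (aL^{-2}/(a_k + aL^{-2}))·Qᵀ(Q v) + (aL^{-2}/(a_k + aL^{-2}))·Qᵀ Φ. Then (a/(2L²))·‖Φ − QΨ‖² + (a_k/2)·‖Ψ − v‖² = (a_{k+1}/(2L²))·‖Φ − Q v‖². -/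
theorem stmt4 {V W : Type*}
    [NormedAddCommGroup V] [InnerProductSpace ℝ V] [FiniteDimensional ℝ V]
    [NormedAddCommGroup W] [InnerProductSpace ℝ W] [FiniteDimensional ℝ W]
    (Q : V →ₗ[ℝ] W)
    (hQ : Q ∘ₗ LinearMap.adjoint Q = LinearMap.id)
    (a ak L : ℝ) (ha : 0 < a) (hak : 0 < ak) (hL : 0 < L)
    (ak1 : ℝ) (hak1 : ak1 = ak * a / (ak + a / L ^ 2))
    (c : ℝ) (hc : c = (a / L ^ 2) / (ak + a / L ^ 2))
    (Φ : W) (v : V)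
    (Ψ : V) (hΨ : Ψ = v - c • (LinearMap.adjoint Q (Q v)) + c • (LinearMap.adjoint Q Φ)) :
    (a / (2 * L ^ 2)) * ‖Φ - Q Ψ‖ ^ 2 + (ak / 2) * ‖Ψ - v‖ ^ 2
      = (ak1 / (2 * L ^ 2)) * ‖Φ - Q v‖ ^ 2 := by
  have hQQ : ∀ w : W, Q (LinearMap.adjoint Q w) = w := by
    intro w
    have := congrArg (fun f => f w) hQ
    simpa using this
  set u : W := Φ - Q v with hu
  have h1 : Φ - Q Ψ = (1 - c) • u := by
    rw [hΨ]
    simp only [map_add, map_sub, map_smul, hQQ, hu]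
    module
  have h2 : Ψ - v = c • (LinearMap.adjoint Q u) := by
    rw [hΨ]
    simp only [map_sub, hu]
    module
  have hnorm : ‖LinearMap.adjoint Q u‖ ^ 2 = ‖u‖ ^ 2 := by
    have : inner ℝ (LinearMap.adjoint Q u) (LinearMap.adjoint Q u) = (inner ℝ u u : ℝ) := by
      rw [LinearMap.adjoint_inner_right, hQQ]
    simpa [real_inner_self_eq_norm_sq] using this
  rw [h1, h2, norm_smul, norm_smul]
  have hb : 0 < ak + a / L ^ 2 := by positivity
  rw [mul_pow, mul_pow, hnorm]
  have hc1 : 1 - c = ak / (ak + a / L ^ 2) := by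
    rw [hc]
    field_simp
    ring
  rw [hc1, hc, hak1]
  have hL2 : (L:ℝ) ^ 2 ≠ 0 := by positivity
  simp only [Real.norm_eq_abs, sq_abs]
  field_simp
end

section
/- With polymers in Z^d as above (connected finite sets of unit cubes, connectedness via shared (d−1)-faces), one has |X| ≤ 3^d·(1 + d(X)), where |X| is the number of cubes and d(X) is the minimal tree length on the cube centers. -/
open MeasureTheory ENNReal

section aux
variable {V : Type*} [NormedAddCommGroup V] [NormedSpace ℝ V]

def segSet (a b s : V) : Set ℝ :=
  {t | t ∈ Set.Ioo (0:ℝ) 1 ∧ dist (a + t • (b - a)) s < 2⁻¹}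

noncomputable def cc (s : V) (e : V × V) : ℝ :=
  dist e.1 e.2 * (volume (segSet e.1 e.2 s)).toReal

lemma segSet_subset (a b s : V) : segSet a b s ⊆ Set.Ioo (0:ℝ) 1 := fun _ ht => ht.1

lemma vol_segSet_le (a b s : V) : volume (segSet a b s) ≤ 1 := by
  calc volume (segSet a b s) ≤ volume (Set.Ioo (0:ℝ) 1) :=
        measure_mono (segSet_subset a b s)
    _ = 1 := by simp

lemma vol_segSet_ne_top (a b s : V) : volume (segSet a b s) ≠ ⊤ :=
  fun h => by simpa [h] using vol_segSet_le a b s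

lemma measurableSet_segSet (a b s : V) : MeasurableSet (segSet a b s) := by
  have hc : Continuous fun t : ℝ => dist (a + t • (b - a)) s :=
    (continuous_const.add (continuous_id.smul continuous_const)).dist continuous_const
  exact measurableSet_Ioo.inter (hc.measurable measurableSet_Iio)

lemma cc_nonneg (s : V) (e : V × V) : 0 ≤ cc s e :=
  mul_nonneg dist_nonneg ENNReal.toReal_nonneg

lemma dist_seg_left (a b : V) (t : ℝ) : dist (a + t • (b - a)) a = |t| * dist a b := by
  rw [dist_eq_norm, dist_eq_norm]
  have : a + t • (b - a) - a = t • -(a - b) := by module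
  rw [this, norm_smul, Real.norm_eq_abs, norm_neg]

lemma dist_seg_right (a b : V) (t : ℝ) : dist (a + t • (b - a)) b = |1 - t| * dist a b := by
  rw [dist_eq_norm, dist_eq_norm]
  have : a + t • (b - a) - b = (1 - t) • (a - b) := by module
  rw [this, norm_smul, Real.norm_eq_abs]

lemma min_sub_min_le (x y c : ℝ) : min x c - min y c ≤ |x - y| := by
  rcases le_total x c with h | h <;> rcases le_total y c with h' | h' <;>
    simp [min_eq_left, min_eq_right, h, h'] <;> cases abs_cases (x - y) <;> linarith

/-- common core: if `Set.Ioo u v ⊆ segSet a b s` then `dist a b * (v - u) ≤ cc s (a,b)` -/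
lemma cc_ge_of_subset {a b s : V} {u v : ℝ} (huv : u ≤ v)
    (h : Set.Ioo u v ⊆ segSet a b s) : dist a b * (v - u) ≤ cc s (a, b) := by
  have h1 : volume (Set.Ioo u v) ≤ volume (segSet a b s) := measure_mono h
  have h2 : (volume (Set.Ioo u v)).toReal ≤ (volume (segSet a b s)).toReal :=
    ENNReal.toReal_mono (vol_segSet_ne_top a b s) h1
  rw [Real.volume_Ioo, ENNReal.toReal_ofReal (by linarith)] at h2
  exact mul_le_mul_of_nonneg_left h2 dist_nonneg

lemma edge_le₁ (a b s : V) :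
    min (dist b s) 2⁻¹ - min (dist a s) 2⁻¹ ≤ cc s (a, b) := by
  set h0 := min (dist a s) 2⁻¹ with hh0
  set h1 := min (dist b s) 2⁻¹ with hh1
  rcases le_or_gt h1 h0 with h | h
  · exact le_trans (by linarith) (cc_nonneg s (a, b))
  · set L := dist a b with hL
    have hL0 : 0 < L := by
      rcases eq_or_ne a b with rfl | hab
      · exact absurd h (lt_irrefl _)
      · exact dist_pos.2 hab
    have hdel : h1 - h0 ≤ L := by
      have := min_sub_min_le (dist b s) (dist a s) 2⁻¹
      have h2 : |dist b s - dist a s| ≤ dist a b := by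
        rw [abs_sub_comm]; exact abs_dist_sub_le a b s
      linarith
    have hsub : Set.Ioo 0 ((h1 - h0) / L) ⊆ segSet a b s := by
      intro t ht
      obtain ⟨ht0, ht1⟩ := ht
      have htL : t * L < h1 - h0 := (lt_div_iff₀ hL0).1 ht1
      have ht1' : t < 1 := by
        have : (h1 - h0) / L ≤ 1 := by rw [div_le_one hL0]; linarith
        linarith
      refine ⟨⟨ht0, ht1'⟩, ?_⟩
      have hda : dist a s ≤ 2⁻¹ := by
        by_contra hcon
        push_neg at hcon
        have : h0 = 2⁻¹ := min_eq_right (le_of_lt hcon)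
        have : h1 ≤ h0 := by rw [this]; exact min_le_right _ _
        linarith
      have hh0' : h0 = dist a s := min_eq_left hda
      calc dist (a + t • (b - a)) s ≤ dist (a + t • (b - a)) a + dist a s :=
            dist_triangle _ _ _
        _ = |t| * L + dist a s := by rw [dist_seg_left]
        _ = t * L + dist a s := by rw [abs_of_pos ht0]
        _ < (h1 - h0) + dist a s := by linarith
        _ ≤ 2⁻¹ := by rw [hh0']; have := min_le_right (dist b s) 2⁻¹; linarith [hh1 ▸ this]
    have := cc_ge_of_subset (div_pos (by linarith) hL0).le hsub
    calc h1 - h0 = L * ((h1 - h0) / L - 0) := by field_simp; ring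
      _ ≤ cc s (a, b) := this

lemma edge_le₂ (a b s : V) :
    min (dist a s) 2⁻¹ - min (dist b s) 2⁻¹ ≤ cc s (a, b) := by
  set h0 := min (dist a s) 2⁻¹ with hh0
  set h1 := min (dist b s) 2⁻¹ with hh1
  rcases le_or_gt h0 h1 with h | h
  · exact le_trans (by linarith) (cc_nonneg s (a, b))
  · set L := dist a b with hL
    have hL0 : 0 < L := by
      rcases eq_or_ne a b with rfl | hab
      · exact absurd h (lt_irrefl _)
      · exact dist_pos.2 hab
    have hdel : h0 - h1 ≤ L := by
      have := min_sub_min_le (dist a s) (dist b s) 2⁻¹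
      have h2 : |dist a s - dist b s| ≤ dist a b := abs_dist_sub_le a b s
      linarith
    have hsub : Set.Ioo (1 - (h0 - h1) / L) 1 ⊆ segSet a b s := by
      intro t ht
      obtain ⟨ht0, ht1⟩ := ht
      have ht0' : 0 < t := by
        have : (h0 - h1) / L ≤ 1 := by rw [div_le_one hL0]; linarith
        linarith
      have htL : (1 - t) * L < h0 - h1 := by
        have : 1 - t < (h0 - h1) / L := by linarith
        calc (1 - t) * L < ((h0 - h1) / L) * L := by
              exact mul_lt_mul_of_pos_right this hL0
          _ = h0 - h1 := by field_simp
      refine ⟨⟨ht0', ht1⟩, ?_⟩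
      have hdb : dist b s ≤ 2⁻¹ := by
        by_contra hcon
        push_neg at hcon
        have : h1 = 2⁻¹ := min_eq_right (le_of_lt hcon)
        have : h0 ≤ h1 := by rw [this]; exact min_le_right _ _
        linarith
      have hh1' : h1 = dist b s := min_eq_left hdb
      calc dist (a + t • (b - a)) s ≤ dist (a + t • (b - a)) b + dist b s :=
            dist_triangle _ _ _
        _ = |1 - t| * L + dist b s := by rw [dist_seg_right]
        _ = (1 - t) * L + dist b s := by rw [abs_of_nonneg (by linarith)]
        _ < (h0 - h1) + dist b s := by linarith
        _ ≤ 2⁻¹ := by rw [hh1']; have := min_le_right (dist a s) 2⁻¹; linarith [hh0 ▸ this]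
    have := cc_ge_of_subset (by
        have : (0:ℝ) ≤ (h0 - h1) / L := div_nonneg (by linarith) hL0.le
        linarith) hsub
    calc h0 - h1 = L * (1 - (1 - (h0 - h1) / L)) := by field_simp; ring
      _ ≤ cc s (a, b) := this

end aux

lemma chain_mono_mem {α : Type*} {R R' : α → α → Prop} :
    ∀ {l : List α} {a : α}, List.Chain R a l →
    (∀ p ∈ a :: l, ∀ q ∈ l, R p q → R' p q) → List.Chain R' a l := by
  intro l
  induction l with
  | nil => intro a _ _; exact List.Chain.nil
  | cons x l ih =>
    intro a hc hmem
    unfold List.Chain at hc ⊢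
    rw [List.chain_cons] at hc ⊢
    refine ⟨hmem a (by simp) x (by simp) hc.1, ih hc.2 ?_⟩
    intro p hp q hq hR
    exact hmem p (by simp at hp ⊢; tauto) q (by simp [hq]) hR

lemma nodup_chain_aux {α : Type*} {r : α → α → Prop} :
    ∀ (n : ℕ) (l : List α), l.length ≤ n → ∀ (a : α), List.Chain r a l →
    ∃ m : List α, List.Chain r a m ∧ m ⊆ l ∧ (a :: m).Nodup ∧
      List.getLast (a :: m) (List.cons_ne_nil _ _) = List.getLast (a :: l) (List.cons_ne_nil _ _) := by
  intro n
  induction n with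
  | zero =>
    intro l hl a hc
    rw [Nat.le_zero, List.length_eq_zero_iff] at hl
    subst hl
    exact ⟨[], List.Chain.nil, by simp, by simp, rfl⟩
  | succ n ih =>
    intro l hl a hc
    by_cases ha : a ∈ l
    · obtain ⟨l₁, l₂, rfl⟩ := List.append_of_mem ha
      have hc₂ : List.Chain r a l₂ := (List.isChain_cons_split.1 hc).2
      have hlen : l₂.length ≤ n := by
        have := hl
        simp only [List.length_append, List.length_cons] at this
        omega
      obtain ⟨m, hm1, hm2, hm3, hm4⟩ := ih l₂ hlen a hc₂
      refine ⟨m, hm1, fun x hx => by simp [hm2 hx], hm3, ?_⟩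
      rw [hm4]
      rw [List.getLast_congr _ _ (show a :: (l₁ ++ a :: l₂) = (a :: l₁) ++ (a :: l₂) by simp),
        List.getLast_append_of_ne_nil (by simp) (List.cons_ne_nil _ _)]
      simp
    · cases l with
      | nil => exact ⟨[], List.Chain.nil, by simp, by simp, rfl⟩
      | cons x l' =>
        unfold List.Chain at hc
        rw [List.chain_cons] at hc
        have hlen : l'.length ≤ n := by simp at hl; omega
        obtain ⟨m, hm1, hm2, hm3, hm4⟩ := ih l' hlen x hc.2
        refine ⟨x :: m, List.chain_cons.2 ⟨hc.1, hm1⟩, ?_, ?_, ?_⟩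
        · intro y hy
          rcases List.mem_cons.1 hy with rfl | hy'
          · simp
          · exact List.mem_cons_of_mem _ (hm2 hy')
        · rw [List.nodup_cons]
          refine ⟨?_, hm3⟩
          intro hmem
          apply ha
          rcases List.mem_cons.1 hmem with rfl | hmem'
          · simp
          · exact List.mem_cons_of_mem _ (hm2 hmem')
        · rw [List.getLast_cons (List.cons_ne_nil _ _), hm4,
            List.getLast_cons (List.cons_ne_nil _ _)]

lemma exists_nodup_chain {α : Type*} {r : α → α → Prop} {a b : α}
    (h : Relation.ReflTransGen r a b) :
    ∃ l : List α, List.Chain r a l ∧ (a :: l).Nodup ∧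
      List.getLast (a :: l) (List.cons_ne_nil _ _) = b := by
  obtain ⟨l, hc, hl⟩ := List.exists_isChain_cons_of_relationReflTransGen h
  obtain ⟨m, hm1, _, hm3, hm4⟩ := nodup_chain_aux l.length l le_rfl a hc
  exact ⟨m, hm1, hm3, hm4.trans hl⟩

section main
variable {V : Type*} [NormedAddCommGroup V] [NormedSpace ℝ V]

lemma key_chain (s₀ : V) :
    ∀ (l : List V) (a : V) (E : Finset (V × V)),
    List.Chain (fun u v => (u, v) ∈ E ∨ (v, u) ∈ E) a l → (a :: l).Nodup →
    min (dist (List.getLast (a :: l) (List.cons_ne_nil _ _)) s₀) 2⁻¹ - min (dist a s₀) 2⁻¹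
      ≤ ∑ e ∈ E, cc s₀ e := by
  classical
  intro l
  induction l with
  | nil =>
    intro a E _ _
    simp only [List.getLast_singleton]
    have : (0:ℝ) ≤ ∑ e ∈ E, cc s₀ e := Finset.sum_nonneg fun e _ => cc_nonneg s₀ e
    simpa using this
  | cons x l ih =>
    intro a E hc hnd
    unfold List.Chain at hc
    rw [List.chain_cons] at hc
    obtain ⟨hax, hrest⟩ := hc
    have hanx : a ∉ x :: l := (List.nodup_cons.1 hnd).1
    obtain ⟨e, heE, hedge, hea⟩ :
        ∃ e ∈ E, (min (dist x s₀) 2⁻¹ - min (dist a s₀) 2⁻¹ ≤ cc s₀ e)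
          ∧ (e.1 = a ∨ e.2 = a) := by
      rcases hax with he | he
      · exact ⟨(a, x), he, edge_le₁ a x s₀, Or.inl rfl⟩
      · exact ⟨(x, a), he, edge_le₂ x a s₀, Or.inr rfl⟩
    have hchain' : List.Chain
        (fun u v => (u, v) ∈ E.erase e ∨ (v, u) ∈ E.erase e) x l := by
      refine chain_mono_mem hrest ?_
      intro p hp q hq hR
      have hpa : p ≠ a := fun h => hanx (h ▸ hp)
      have hqa : q ≠ a := fun h => hanx (h ▸ List.mem_cons_of_mem _ hq)
      have hne1 : (p, q) ≠ e := by
        intro hpe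
        have := hea
        rw [← hpe] at this
        rcases this with h' | h'
        exacts [hpa h', hqa h']
      have hne2 : (q, p) ≠ e := by
        intro hpe
        have := hea
        rw [← hpe] at this
        rcases this with h' | h'
        exacts [hqa h', hpa h']
      rcases hR with h | h
      · exact Or.inl (Finset.mem_erase.2 ⟨hne1, h⟩)
      · exact Or.inr (Finset.mem_erase.2 ⟨hne2, h⟩)
    have hih := ih x (E.erase e) hchain' (List.nodup_cons.1 hnd).2
    have hsum : ∑ f ∈ E.erase e, cc s₀ f + cc s₀ e = ∑ f ∈ E, cc s₀ f :=
      Finset.sum_erase_add E _ heE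
    rw [List.getLast_cons (List.cons_ne_nil _ _)]
    linarith

lemma point_bound (s₀ t : V) (E : Finset (V × V)) (hst : 1 ≤ dist s₀ t)
    (hconn : Relation.ReflTransGen (fun u v => (u, v) ∈ E ∨ (v, u) ∈ E) s₀ t) :
    2⁻¹ ≤ ∑ e ∈ E, cc s₀ e := by
  obtain ⟨l, hc, hnd, hlast⟩ := exists_nodup_chain hconn
  have := key_chain s₀ l s₀ E hc hnd
  rw [hlast] at this
  have h1 : min (dist t s₀) 2⁻¹ = 2⁻¹ := by
    rw [dist_comm] at hst
    exact min_eq_right (by linarith)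
  have h2 : min (dist s₀ s₀) 2⁻¹ = 0 := by
    simp
  rw [h1, h2] at this
  linarith

lemma sum_vol_le (a b : V) (S : Finset V)
    (hS : ∀ s ∈ S, ∀ t ∈ S, s ≠ t → 1 ≤ dist s t) :
    ∑ s ∈ S, (volume (segSet a b s)).toReal ≤ 1 := by
  have hdisj : ∀ s ∈ S, ∀ t ∈ S, s ≠ t →
      Disjoint (segSet a b s) (segSet a b t) := by
    intro s hs t ht hst
    rw [Set.disjoint_left]
    intro u hu hu'
    have : dist s t < 1 := by
      calc dist s t ≤ dist s (a + u • (b - a)) + dist (a + u • (b - a)) t :=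
            dist_triangle _ _ _
        _ < 2⁻¹ + 2⁻¹ := by
            rw [dist_comm s _]
            exact add_lt_add hu.2 (dist_comm t _ ▸ hu'.2)
        _ = 1 := by norm_num
    exact absurd (hS s hs t ht hst) (not_le.2 this)
  have hEnn : ∑ s ∈ S, volume (segSet a b s) ≤ 1 := by
    rw [← measure_biUnion_finset (fun s hs t ht hst => hdisj s hs t ht hst)
      (fun s _ => measurableSet_segSet a b s)]
    calc volume (⋃ s ∈ S, segSet a b s) ≤ volume (Set.Ioo (0:ℝ) 1) := by
          apply measure_mono
          exact Set.iUnion₂_subset fun s _ => segSet_subset a b s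
      _ = 1 := by simp
  calc ∑ s ∈ S, (volume (segSet a b s)).toReal
      = (∑ s ∈ S, volume (segSet a b s)).toReal :=
        (ENNReal.toReal_sum fun s _ => vol_segSet_ne_top a b s).symm
    _ ≤ (1 : ℝ≥0∞).toReal := ENNReal.toReal_mono (by simp) hEnn
    _ = 1 := by simp

lemma card_bound (S : Finset V)
    (hS : ∀ s ∈ S, ∀ t ∈ S, s ≠ t → 1 ≤ dist s t)
    (E : Finset (V × V))
    (hconn : ∀ s ∈ S, ∀ t ∈ S,
      Relation.ReflTransGen (fun u v => (u, v) ∈ E ∨ (v, u) ∈ E) s t) :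
    (S.card : ℝ) ≤ 1 + 2 * ∑ e ∈ E, dist e.1 e.2 := by
  have hW : (0:ℝ) ≤ ∑ e ∈ E, dist e.1 e.2 :=
    Finset.sum_nonneg fun e _ => dist_nonneg
  rcases le_or_gt S.card 1 with h | h
  · have : (S.card : ℝ) ≤ 1 := by exact_mod_cast h
    linarith
  · have hhalf : ∀ s ∈ S, 2⁻¹ ≤ ∑ e ∈ E, cc s e := by
      intro s hs
      obtain ⟨t, ht, hts⟩ := Finset.exists_mem_ne h s
      exact point_bound s t E (hS s hs t ht (Ne.symm hts)) (hconn s hs t ht)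
    have h1 : (S.card : ℝ) * 2⁻¹ ≤ ∑ s ∈ S, ∑ e ∈ E, cc s e := by
      have := Finset.card_nsmul_le_sum S (fun s => ∑ e ∈ E, cc s e) 2⁻¹ hhalf
      simpa [nsmul_eq_mul] using this
    have h2 : ∑ s ∈ S, ∑ e ∈ E, cc s e ≤ ∑ e ∈ E, dist e.1 e.2 := by
      rw [Finset.sum_comm]
      apply Finset.sum_le_sum
      intro e _
      calc ∑ s ∈ S, cc s e
          = dist e.1 e.2 * ∑ s ∈ S, (volume (segSet e.1 e.2 s)).toReal := by
            rw [Finset.mul_sum]; rfl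
        _ ≤ dist e.1 e.2 * 1 :=
            mul_le_mul_of_nonneg_left (sum_vol_le e.1 e.2 S hS) dist_nonneg
        _ = dist e.1 e.2 := mul_one _
    linarith
end main



def FaceAdj {d : ℕ} (x y : Fin d → ℤ) : Prop :=
  (∑ i, (x i - y i).natAbs) = 1

/-- A polymer: a nonempty finite set of unit-cube centers, connected via shared
`(d-1)`-dimensional faces. -/
def IsPolymer {d : ℕ} (X : Finset (Fin d → ℤ)) : Prop :=
  X.Nonempty ∧ ∀ x ∈ X, ∀ y ∈ X,
    Relation.ReflTransGen (fun u v => u ∈ X ∧ v ∈ X ∧ FaceAdj u v) x y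

noncomputable def emb {d : ℕ} (x : Fin d → ℤ) : Fin d → ℝ := fun i => (x i : ℝ)

/-- The (finite) edge set `E` of segments in the continuum connects all the cube
centers of `X`. Extra (Steiner) vertices are allowed. -/
def Connects {d : ℕ} (X : Finset (Fin d → ℤ))
    (E : Finset ((Fin d → ℝ) × (Fin d → ℝ))) : Prop :=
  ∀ x ∈ X, ∀ y ∈ X,
    Relation.ReflTransGen (fun u v => (u, v) ∈ E ∨ (v, u) ∈ E) (emb x) (emb y)

/-- The length of a shortest (Steiner) tree connecting the cube centers of `X`,
in the sup metric (so face-adjacent cube centers are at distance 1). -/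
noncomputable def treeLen {d : ℕ} (X : Finset (Fin d → ℤ)) : ℝ :=
  sInf { c : ℝ | ∃ E : Finset ((Fin d → ℝ) × (Fin d → ℝ)),
    Connects X E ∧ c = ∑ e ∈ E, dist e.1 e.2 }


section final

lemma emb_injective {d : ℕ} : Function.Injective (emb (d := d)) := by
  intro x y h
  funext i
  have h2 : ((x i : ℤ) : ℝ) = ((y i : ℤ) : ℝ) := congrFun h i
  exact_mod_cast h2

lemma one_le_dist_emb {d : ℕ} {x y : Fin d → ℤ} (h : x ≠ y) :
    1 ≤ dist (emb x) (emb y) := by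
  obtain ⟨i, hi⟩ : ∃ i, x i ≠ y i := by
    by_contra hcon; push_neg at hcon; exact h (funext hcon)
  have h1 : dist (emb x i) (emb y i) ≤ dist (emb x) (emb y) := dist_le_pi_dist _ _ i
  have h2 : (1:ℝ) ≤ dist (emb x i) (emb y i) := by
    rw [Real.dist_eq]
    have h3 : (1:ℤ) ≤ |x i - y i| := Int.one_le_abs (sub_ne_zero.2 hi)
    have h4 : ((|x i - y i| : ℤ) : ℝ) = |(x i : ℝ) - (y i : ℝ)| := by push_cast; ring_nf
    rw [show emb x i = ((x i : ℝ)) from rfl, show emb y i = ((y i : ℝ)) from rfl, ← h4]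
    exact_mod_cast h3
  linarith

lemma exists_connects {d : ℕ} (X : Finset (Fin d → ℤ)) (hX : IsPolymer X) :
    ∃ E, Connects X E := by
  classical
  refine ⟨((X ×ˢ X).filter (fun p => FaceAdj p.1 p.2)).image
    (fun p => (emb p.1, emb p.2)), ?_⟩
  intro x hx y hy
  refine Relation.ReflTransGen.lift emb (fun a b hab => ?_) _ _ (hX.2 x hx y hy)
  left
  exact Finset.mem_image.2 ⟨(a, b), Finset.mem_filter.2
    ⟨Finset.mem_product.2 ⟨hab.1, hab.2.1⟩, hab.2.2⟩, rfl⟩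

theorem stmt9 {d : ℕ} (hd : 1 ≤ d) (X : Finset (Fin d → ℤ)) (hX : IsPolymer X) :
    (X.card : ℝ) ≤ 3 ^ d * (1 + treeLen X) := by
  classical
  obtain ⟨E₀, hE₀⟩ := exists_connects X hX
  have hMne : { c : ℝ | ∃ E : Finset ((Fin d → ℝ) × (Fin d → ℝ)),
      Connects X E ∧ c = ∑ e ∈ E, dist e.1 e.2 }.Nonempty := ⟨_, E₀, hE₀, rfl⟩
  have h3dpos : (0:ℝ) < 3 ^ d := by positivity
  have hpow : (3:ℝ) ≤ 3 ^ d := by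
    calc (3:ℝ) = 3 ^ 1 := (pow_one 3).symm
      _ ≤ 3 ^ d := pow_le_pow_right₀ (by norm_num) hd
  have hb : ∀ b ∈ { c : ℝ | ∃ E : Finset ((Fin d → ℝ) × (Fin d → ℝ)),
      Connects X E ∧ c = ∑ e ∈ E, dist e.1 e.2 },
      (X.card : ℝ) / 3 ^ d - 1 ≤ b := by
    rintro b ⟨E, hE, rfl⟩
    have hW : (0:ℝ) ≤ ∑ e ∈ E, dist e.1 e.2 :=
      Finset.sum_nonneg fun e _ => dist_nonneg
    set S := X.image emb with hSdef
    have hScard : S.card = X.card := Finset.card_image_of_injective X emb_injective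
    have hS1 : ∀ s ∈ S, ∀ t ∈ S, s ≠ t → 1 ≤ dist s t := by
      rintro s hs t ht hst
      obtain ⟨x, hx, rfl⟩ := Finset.mem_image.1 hs
      obtain ⟨y, hy, rfl⟩ := Finset.mem_image.1 ht
      exact one_le_dist_emb (fun h => hst (by rw [h]))
    have hconn : ∀ s ∈ S, ∀ t ∈ S,
        Relation.ReflTransGen (fun u v => (u, v) ∈ E ∨ (v, u) ∈ E) s t := by
      rintro s hs t ht
      obtain ⟨x, hx, rfl⟩ := Finset.mem_image.1 hs
      obtain ⟨y, hy, rfl⟩ := Finset.mem_image.1 ht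
      exact hE x hx y hy
    have hcb := card_bound S hS1 E hconn
    rw [hScard] at hcb
    rw [sub_le_iff_le_add, div_le_iff₀ h3dpos]
    nlinarith [mul_nonneg (by linarith : (0:ℝ) ≤ (3:ℝ) ^ d - 3)
      (by linarith : (0:ℝ) ≤ 1 + ∑ e ∈ E, dist e.1 e.2)]
  have hInf : (X.card : ℝ) / 3 ^ d - 1 ≤ treeLen X := le_csInf hMne hb
  rw [sub_le_iff_le_add, div_le_iff₀ h3dpos] at hInf
  calc (X.card : ℝ) ≤ (treeLen X + 1) * 3 ^ d := hInf
    _ = 3 ^ d * (1 + treeLen X) := by ring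

end final
end

section
/- Let X₁,…,Xₙ be polymers whose union Y = ∪ᵢ Xᵢ is connected and which cannot be partitioned into two nonempty groups with disjoint unions (equivalently, the intersection graph on {X₁,…,Xₙ}, with edges {i,j} when Xᵢ ∩ Xⱼ ≠ ∅, is connected). Then d(Y) ≤ ∑ᵢ d(Xᵢ) + (n−1), where d denotes the normalized minimal tree length. -/
lemma sum_biUnion_le_aux {ι α : Type*} [DecidableEq α] (s : Finset ι) (t : ι → Finset α)
    (f : α → ℝ) (hf : ∀ a, 0 ≤ f a) :
    ∑ a ∈ s.biUnion t, f a ≤ ∑ i ∈ s, ∑ a ∈ t i, f a := by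
  classical
  induction s using Finset.induction with
  | empty => simp
  | @insert a s h ih =>
    rw [Finset.biUnion_insert, Finset.sum_insert h]
    have : t a ∪ s.biUnion t = t a ∪ (s.biUnion t \ t a) := by
      rw [Finset.union_sdiff_self_eq_union]
    rw [this, Finset.sum_union Finset.disjoint_sdiff]
    have h1 : ∑ x ∈ s.biUnion t \ t a, f x ≤ ∑ x ∈ s.biUnion t, f x :=
      Finset.sum_le_sum_of_subset_of_nonneg (Finset.sdiff_subset) (fun x _ _ => hf x)
    linarith

lemma treeLen_set_nonempty {d : ℕ} (X : Finset (Fin d → ℤ)) :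
    { c : ℝ | ∃ E : Finset ((Fin d → ℝ) × (Fin d → ℝ)),
      Connects X E ∧ c = ∑ e ∈ E, dist e.1 e.2 }.Nonempty := by
  classical
  refine ⟨∑ e ∈ (X ×ˢ X).image (fun p => (emb p.1, emb p.2)), dist e.1 e.2,
    (X ×ˢ X).image (fun p => (emb p.1, emb p.2)), ?_, rfl⟩
  intro x hx y hy
  exact Relation.ReflTransGen.single (Or.inl (Finset.mem_image.2
    ⟨(x, y), Finset.mk_mem_product hx hy, rfl⟩))

lemma treeLen_set_bddBelow {d : ℕ} (X : Finset (Fin d → ℤ)) :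
    BddBelow { c : ℝ | ∃ E : Finset ((Fin d → ℝ) × (Fin d → ℝ)),
      Connects X E ∧ c = ∑ e ∈ E, dist e.1 e.2 } := by
  refine ⟨0, fun c hc => ?_⟩
  obtain ⟨E, _, rfl⟩ := hc
  exact Finset.sum_nonneg fun e _ => dist_nonneg

theorem stmt13 {d n : ℕ} (hd : 1 ≤ d) (hn : 1 ≤ n)
    (X : Fin n → Finset (Fin d → ℤ))
    (hpoly : ∀ i, IsPolymer (X i))
    (hconn : ∀ i j : Fin n,
      Relation.ReflTransGen (fun a b => ((X a) ∩ (X b)).Nonempty) i j) :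
    treeLen (Finset.univ.biUnion X) ≤ (∑ i, treeLen (X i)) + ((n : ℝ) - 1) := by
  classical
  have hnR : (1:ℝ) ≤ (n:ℝ) := by exact_mod_cast hn
  have hnne : (n:ℝ) ≠ 0 := by positivity
  have key : treeLen (Finset.univ.biUnion X) ≤ ∑ i, treeLen (X i) := by
    refine le_of_forall_pos_le_add ?_
    intro ε hε
    have hεn : 0 < ε / n := by positivity
    have choice : ∀ i : Fin n, ∃ E : Finset ((Fin d → ℝ) × (Fin d → ℝ)),
        Connects (X i) E ∧ ∑ e ∈ E, dist e.1 e.2 < treeLen (X i) + ε / n := by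
      intro i
      obtain ⟨c, hc, hlt⟩ := Real.lt_sInf_add_pos (treeLen_set_nonempty (X i)) hεn
      obtain ⟨E, hEc, rfl⟩ := hc
      exact ⟨E, hEc, hlt⟩
    choose E hE hEc using choice
    set F : Finset ((Fin d → ℝ) × (Fin d → ℝ)) := Finset.univ.biUnion E with hF
    have hsub : ∀ i : Fin n, E i ⊆ F := fun i =>
      Finset.subset_biUnion_of_mem E (Finset.mem_univ i)
    have mono : ∀ i : Fin n, ∀ u v : Fin d → ℝ,
        Relation.ReflTransGen (fun a b => (a, b) ∈ E i ∨ (b, a) ∈ E i) u v →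
        Relation.ReflTransGen (fun a b => (a, b) ∈ F ∨ (b, a) ∈ F) u v := by
      intro i u v h
      exact Relation.ReflTransGen.mono (fun a b hab => hab.imp (fun h' => hsub i h') (fun h' => hsub i h')) _ _ h
    have hConn : Connects (Finset.univ.biUnion X) F := by
      intro x hx y hy
      simp only [Finset.mem_biUnion] at hx hy
      obtain ⟨i, -, hx⟩ := hx
      obtain ⟨j, -, hy⟩ := hy
      have main : ∀ k : Fin n,
          Relation.ReflTransGen (fun a b => ((X a) ∩ (X b)).Nonempty) i k →
          ∀ z ∈ X k,
            Relation.ReflTransGen (fun a b => (a, b) ∈ F ∨ (b, a) ∈ F) (emb x) (emb z) := by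
        intro k hk
        induction hk with
        | refl => exact fun z hz => mono i _ _ (hE i x hx z hz)
        | @tail b c _ hbc ih =>
          intro z hz
          obtain ⟨w, hw⟩ := hbc
          rw [Finset.mem_inter] at hw
          exact (ih w hw.1).trans (mono c _ _ (hE c w hw.2 z hz))
      exact main j (hconn i j) y hy
    have h1 : treeLen (Finset.univ.biUnion X) ≤ ∑ e ∈ F, dist e.1 e.2 :=
      csInf_le (treeLen_set_bddBelow _) ⟨F, hConn, rfl⟩
    have h2 : ∑ e ∈ F, dist e.1 e.2 ≤ ∑ i, ∑ e ∈ E i, dist e.1 e.2 :=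
      sum_biUnion_le_aux _ _ _ (fun e => dist_nonneg)
    have h3 : ∑ i, ∑ e ∈ E i, dist e.1 e.2 ≤ ∑ i, (treeLen (X i) + ε / n) :=
      Finset.sum_le_sum fun i _ => (hEc i).le
    have h4 : ∑ i : Fin n, (treeLen (X i) + ε / n) = (∑ i, treeLen (X i)) + ε := by
      rw [Finset.sum_add_distrib, Finset.sum_const, Finset.card_univ, Fintype.card_fin,
        nsmul_eq_mul, mul_div_cancel₀ _ hnne]
    linarith
  linarith
end
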